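/- Eigenvalues of a Lipschitz curve of commuting self-adjoint matrices are Lipschitz as an unordered tuple: if S(t) is Lipschitz in CS^d_n on an interval I, then there exist Lipschitz functions x_1(t),...,x_n(t): I → ℝ^d with σ(S(t)) = {x_i(t) : 1 ≤ i ≤ n} for all t. -/

import Mathlib

open Matrix

set_option maxHeartbeats 1000000
set_option linter.unusedVariables false

theorem jointDiag (d n : ℕ) (A : Fin d → Matrix (Fin n) (Fin n) ℂ)
    (hherm : ∀ r, (A r).IsHermitian)
    (hcomm : ∀ r s, A r * A s = A s * A r) :
    ∃ U ∈ Matrix.unitaryGroup (Fin n) ℂ, ∃ lam : Fin n → Fin d → ℝ,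
      ∀ r, A r = U * Matrix.diagonal (fun i => (lam i r : ℂ)) * star U := by
  classical
  set T : Fin d → (EuclideanSpace ℂ (Fin n) →ₗ[ℂ] EuclideanSpace ℂ (Fin n)) :=
    fun r => Matrix.toEuclideanLin (A r) with hTdef
  have hsym : ∀ r, (T r).IsSymmetric := fun r =>
    Matrix.isHermitian_iff_isSymmetric.1 (hherm r)
  have hmulT : ∀ r s, T r * T s = T s * T r := by
    intro r s
    have h : ∀ (M N : Matrix (Fin n) (Fin n) ℂ),
        Matrix.toEuclideanLin (M * N) = Matrix.toEuclideanLin M * Matrix.toEuclideanLin N := by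
      intro M N
      rw [Matrix.toEuclideanLin_eq_toLin, Matrix.toLin_mul _ (PiLp.basisFun 2 ℂ (Fin n)) _]
      rfl
    rw [← h, ← h, hcomm]
  have hcomm' : Pairwise (Function.onFun Commute T) := fun r s _ => hmulT r s
  have htop : ⨆ χ : Fin d → ℂ, ⨅ r, Module.End.eigenspace (T r) (χ r) = ⊤ :=
    LinearMap.IsSymmetric.iSup_iInf_eq_top_of_commute hsym hcomm'
  have hfin : (Set.pi Set.univ fun r => {μ | Module.End.HasEigenvalue (T r) μ}).Finite :=
    Set.Finite.pi fun r => Module.End.finite_hasEigenvalue (T r)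
  set t : Finset (Fin d → ℂ) := hfin.toFinset with htdef
  have hbot : ∀ χ ∉ t, (⨅ r, Module.End.eigenspace (T r) (χ r)) = ⊥ := by
    intro χ hχ
    by_contra hne
    obtain ⟨v, hv, hv0⟩ := Submodule.exists_mem_ne_zero_of_ne_bot hne
    apply hχ
    simp only [htdef, Set.Finite.mem_toFinset, Set.mem_pi, Set.mem_univ, forall_true_left]
    intro r
    exact Module.End.hasEigenvalue_of_hasEigenvector ⟨(Submodule.mem_iInf _).1 hv r, hv0⟩
  have htop' : ⨆ χ : ↥t, ⨅ r, Module.End.eigenspace (T r) ((χ : Fin d → ℂ) r) = ⊤ := by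
    rw [← htop]
    apply le_antisymm
    · exact iSup_le fun χ => le_iSup
        (fun χ : Fin d → ℂ => ⨅ r, Module.End.eigenspace (T r) (χ r)) _
    · refine iSup_le fun χ => ?_
      by_cases hχ : χ ∈ t
      · exact le_iSup (fun χ : ↥t => ⨅ r, Module.End.eigenspace (T r) ((χ : Fin d → ℂ) r))
          ⟨χ, hχ⟩
      · rw [hbot χ hχ]; exact bot_le
  have OF := LinearMap.IsSymmetric.orthogonalFamily_iInf_eigenspaces hsym
  have OF' := OF.comp (f := (Subtype.val : ↥t → (Fin d → ℂ))) Subtype.coe_injective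
  have internal := OF'.isInternal_iff.mpr (by rw [htop', Submodule.top_orthogonal_eq_bot])
  set b0 := internal.collectedOrthonormalBasis OF'
    (fun χ : ↥t => stdOrthonormalBasis ℂ
      ↥(⨅ r, Module.End.eigenspace (T r) ((χ : Fin d → ℂ) r))) with hb0def
  have hcard : Fintype.card
      (Σ χ : ↥t, Fin (Module.finrank ℂ
        ↥(⨅ r, Module.End.eigenspace (T r) ((χ : Fin d → ℂ) r)))) = n := by
    rw [← Module.finrank_eq_card_basis b0.toBasis, finrank_euclideanSpace, Fintype.card_fin]
  set e := Fintype.equivFinOfCardEq hcard with hedef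
  set b := b0.reindex e with hbdef
  have hmemV : ∀ i : Fin n,
      b i ∈ ⨅ r, Module.End.eigenspace (T r) (((e.symm i).1 : Fin d → ℂ) r) := by
    intro i
    rw [hbdef, OrthonormalBasis.reindex_apply]
    exact internal.collectedOrthonormalBasis_mem OF' _ _
  have heig : ∀ (i : Fin n) (r : Fin d), T r (b i) = ((e.symm i).1 : Fin d → ℂ) r • b i := by
    intro i r
    exact (Module.End.mem_eigenspace_iff).1 ((Submodule.mem_iInf _).1 (hmemV i) r)
  set lam : Fin n → Fin d → ℝ := fun i r => (((e.symm i).1 : Fin d → ℂ) r).re with hlamdef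
  have hreal : ∀ (i : Fin n) (r : Fin d), (lam i r : ℂ) = ((e.symm i).1 : Fin d → ℂ) r := by
    intro i r
    have hne : b i ≠ 0 := b.orthonormal.ne_zero i
    have hev : Module.End.HasEigenvalue (T r) (((e.symm i).1 : Fin d → ℂ) r) :=
      Module.End.hasEigenvalue_of_hasEigenvector
        ⟨(Module.End.mem_eigenspace_iff).2 (heig i r), hne⟩
    have := (hsym r).conj_eigenvalue_eq_self hev
    exact Complex.conj_eq_iff_re.1 this
  set Um : Matrix (Fin n) (Fin n) ℂ :=
    (EuclideanSpace.basisFun (Fin n) ℂ).toBasis.toMatrix b.toBasis with hUmdef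
  have hUmem : Um ∈ Matrix.unitaryGroup (Fin n) ℂ :=
    (EuclideanSpace.basisFun (Fin n) ℂ).toMatrix_orthonormalBasis_mem_unitary b
  have hUapply : ∀ i j, Um i j = b j i := by
    intro i j
    simp [hUmdef, Module.Basis.toMatrix_apply]
  have hUmul : ∀ j, Um *ᵥ Pi.single j 1 = ⇑(b j) := by
    intro j
    ext i
    simp only [mulVec_single_one, Matrix.col_apply]
    exact hUapply i j
  have hstarU : ∀ j, (star Um) *ᵥ ⇑(b j) = Pi.single j 1 := by
    intro j
    rw [← hUmul, mulVec_mulVec, Matrix.mem_unitaryGroup_iff'.1 hUmem, one_mulVec]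
  have hmv : ∀ (r : Fin d) (j : Fin n), A r *ᵥ ⇑(b j) = (lam j r : ℂ) • ⇑(b j) := by
    intro r j
    have h1 := heig j r
    rw [← hreal j r] at h1
    have h2 := congrArg (WithLp.equiv 2 (Fin n → ℂ)) h1
    exact h2
  have hdiag : ∀ r, star Um * A r * Um = Matrix.diagonal (fun i => (lam i r : ℂ)) := by
    intro r
    ext i j
    have h1 : (star Um * A r * Um) *ᵥ Pi.single j 1
        = (lam j r : ℂ) • (Pi.single j 1 : Fin n → ℂ) := by
      rw [← Matrix.mulVec_mulVec, ← Matrix.mulVec_mulVec, hUmul, hmv, Matrix.mulVec_smul, hstarU]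
    have h2 := congrFun h1 i
    simp only [Pi.smul_apply, smul_eq_mul] at h2
    simp only [Matrix.mulVec_single_one, Matrix.col_apply] at h2
    rw [Matrix.diagonal_apply, h2]
    by_cases hij : i = j
    · subst hij; simp
    · simp [hij, Pi.single_eq_of_ne hij]
  refine ⟨Um, hUmem, lam, fun r => ?_⟩
  rw [← hdiag r]
  rw [Matrix.mul_assoc, Matrix.mul_assoc, Matrix.mul_assoc]
  rw [Matrix.mem_unitaryGroup_iff.1 hUmem, Matrix.mul_one]
  rw [← Matrix.mul_assoc, Matrix.mem_unitaryGroup_iff.1 hUmem, Matrix.one_mul]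

theorem exists_unitary_perm (n : ℕ) (π : Equiv.Perm (Fin n)) :
    ∃ P ∈ Matrix.unitaryGroup (Fin n) ℂ, ∀ u : Fin n → ℂ,
      P * Matrix.diagonal u * star P = Matrix.diagonal (fun i => u (π⁻¹ i)) := by
  classical
  set P : Matrix (Fin n) (Fin n) ℂ := Matrix.of fun i j => if π j = i then (1:ℂ) else 0 with hP
  have hPmem : P ∈ Matrix.unitaryGroup (Fin n) ℂ := by
    rw [Matrix.mem_unitaryGroup_iff']
    ext i j
    simp only [Matrix.mul_apply, Matrix.star_apply, hP, Matrix.of_apply,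
      apply_ite (star : ℂ → ℂ), star_one, star_zero, Matrix.one_apply]
    rw [Finset.sum_eq_single (π i)]
    · by_cases hij : i = j
      · subst hij; simp
      · have : ¬ (π j = π i) := fun h => hij (π.injective h).symm
        simp [this, hij]
    · intro k _ hk
      have : ¬ (π i = k) := fun h => hk h.symm
      simp [this]
    · simp
  refine ⟨P, hPmem, fun u => ?_⟩
  ext i j
  have hsP : ∀ a b, (star P) a b = if π a = b then (1:ℂ) else 0 := by
    intro a b
    simp only [Matrix.star_apply, hP, Matrix.of_apply, apply_ite (star : ℂ → ℂ),
      star_one, star_zero]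
  rw [Matrix.mul_apply]
  rw [Finset.sum_eq_single (π⁻¹ i)]
  · rw [Matrix.mul_diagonal, hsP, hP]
    simp only [Matrix.of_apply, Equiv.Perm.coe_inv, Equiv.apply_symm_apply, Matrix.diagonal_apply]
    by_cases hij : i = j
    · subst hij; simp
    · have : ¬ (π (π⁻¹ i) = j) := by
        simp only [Equiv.Perm.coe_inv, Equiv.apply_symm_apply]; exact hij
      simp [hij, this]
  · intro k _ hk
    rw [Matrix.mul_diagonal, hP]
    have : ¬ (π k = i) := by
      intro h; exact hk (by rw [← h]; simp)
    simp [Matrix.of_apply, this]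
  · simp

theorem hwMatch (d n : ℕ) (A B : Fin d → Matrix (Fin n) (Fin n) ℂ)
    (U V : Matrix (Fin n) (Fin n) ℂ)
    (hU : U ∈ Matrix.unitaryGroup (Fin n) ℂ) (hV : V ∈ Matrix.unitaryGroup (Fin n) ℂ)
    (lam mu : Fin n → Fin d → ℝ)
    (hA : ∀ r, A r = U * Matrix.diagonal (fun i => (lam i r : ℂ)) * star U)
    (hB : ∀ r, B r = V * Matrix.diagonal (fun i => (mu i r : ℂ)) * star V) :
    ∃ π : Equiv.Perm (Fin n), ∀ i,
      ∑ r, (lam i r - mu (π i) r)^2 ≤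
        ∑ r, ∑ p, ∑ q, Complex.normSq ((A r - B r) p q) := by
  classical
  set W : Matrix (Fin n) (Fin n) ℂ := star U * V with hW
  have hWmem : W ∈ Matrix.unitaryGroup (Fin n) ℂ :=
    mul_mem (Unitary.star_mem hU) hV
  have hrow : ∀ p, ∑ q, Complex.normSq (W p q) = 1 := by
    intro p
    have h1 : (W * star W) p p = 1 := by
      rw [Matrix.mem_unitaryGroup_iff.1 hWmem, Matrix.one_apply_eq]
    rw [Matrix.mul_apply] at h1
    have h2 : ∀ q, W p q * (star W) q p = (Complex.normSq (W p q) : ℂ) := by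
      intro q
      rw [Matrix.star_apply, Complex.star_def, Complex.mul_conj]
    rw [Finset.sum_congr rfl fun q _ => h2 q] at h1
    have := congrArg Complex.re h1
    simpa using this
  have hcol : ∀ q, ∑ p, Complex.normSq (W p q) = 1 := by
    intro q
    have h1 : (star W * W) q q = 1 := by
      rw [Matrix.mem_unitaryGroup_iff'.1 hWmem, Matrix.one_apply_eq]
    rw [Matrix.mul_apply] at h1
    have h2 : ∀ p, (star W) q p * W p q = (Complex.normSq (W p q) : ℂ) := by
      intro p
      rw [Matrix.star_apply, Complex.star_def, mul_comm, Complex.mul_conj]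
    rw [Finset.sum_congr rfl fun p _ => h2 p] at h1
    have := congrArg Complex.re h1
    simpa using this
  set M : Matrix (Fin n) (Fin n) ℝ := Matrix.of fun p q => Complex.normSq (W p q) with hM
  have hMds : M ∈ doublyStochastic ℝ (Fin n) := by
    rw [mem_doublyStochastic_iff_sum]
    exact ⟨fun p q => Complex.normSq_nonneg _, fun p => hrow p, fun q => hcol q⟩
  set F : Matrix (Fin n) (Fin n) ℂ → ℝ := fun X => ∑ p, ∑ q, Complex.normSq (X p q) with hF
  have hFtrace : ∀ X, (F X : ℂ) = Matrix.trace (Xᴴ * X) := by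
    intro X
    rw [Matrix.trace]
    simp only [Matrix.diag_apply, Matrix.mul_apply, Matrix.conjTranspose_apply, hF]
    push_cast
    rw [Finset.sum_comm]
    congr 1
    ext p
    congr 1
    ext q
    rw [mul_comm, Complex.star_def, Complex.mul_conj]
  have hFinv : ∀ X : Matrix (Fin n) (Fin n) ℂ, F (U * X * star V) = F X := by
    intro X
    have key : (F (U * X * star V) : ℂ) = (F X : ℂ) := by
      rw [hFtrace, hFtrace]
      rw [Matrix.star_eq_conjTranspose]
      have e1 : (U * X * Vᴴ)ᴴ = V * Xᴴ * Uᴴ := by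
        rw [Matrix.conjTranspose_mul, Matrix.conjTranspose_mul,
          Matrix.conjTranspose_conjTranspose, Matrix.mul_assoc]
      rw [e1]
      have hUU : Uᴴ * U = 1 := by
        rw [← Matrix.star_eq_conjTranspose]
        exact Matrix.mem_unitaryGroup_iff'.1 hU
      have hVV : Vᴴ * V = 1 := by
        rw [← Matrix.star_eq_conjTranspose]
        exact Matrix.mem_unitaryGroup_iff'.1 hV
      have e2 : V * Xᴴ * Uᴴ * (U * X * Vᴴ) = V * (Xᴴ * X) * Vᴴ := by
        rw [Matrix.mul_assoc U X Vᴴ, Matrix.mul_assoc (V * Xᴴ) Uᴴ (U * (X * Vᴴ)),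
          ← Matrix.mul_assoc Uᴴ U (X * Vᴴ), hUU, Matrix.one_mul]
        simp only [Matrix.mul_assoc]
      rw [e2, Matrix.trace_mul_comm (V * (Xᴴ * X)) Vᴴ, ← Matrix.mul_assoc Vᴴ V (Xᴴ * X), hVV,
        Matrix.one_mul]
    exact_mod_cast key
  have hFkey : ∀ r, F (A r - B r)
      = ∑ p, ∑ q, M p q * (lam p r - mu q r)^2 := by
    intro r
    have hfactor : A r - B r
        = U * (Matrix.diagonal (fun i => (lam i r : ℂ)) * W
            - W * Matrix.diagonal (fun i => (mu i r : ℂ))) * star V := by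
      rw [hA, hB, hW]
      rw [Matrix.mul_sub, Matrix.sub_mul]
      congr 1
      · simp only [Matrix.mul_assoc]
        rw [Matrix.mem_unitaryGroup_iff.1 hV, Matrix.mul_one]
      · simp only [Matrix.mul_assoc]
        rw [← Matrix.mul_assoc U (star U) _, Matrix.mem_unitaryGroup_iff.1 hU, Matrix.one_mul]
    rw [hfactor, hFinv]
    rw [hF]
    apply Finset.sum_congr rfl
    intro p _
    apply Finset.sum_congr rfl
    intro q _
    rw [Matrix.sub_apply, Matrix.diagonal_mul, Matrix.mul_diagonal]
    have : (lam p r : ℂ) * W p q - W p q * (mu q r : ℂ)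
        = ((lam p r - mu q r : ℝ) : ℂ) * W p q := by
      push_cast; ring
    rw [this, Complex.normSq_mul, Complex.normSq_ofReal, hM]
    simp only [Matrix.of_apply]
    ring
  -- Birkhoff
  obtain ⟨w, hw0, hw1, hwM⟩ := exists_eq_sum_perm_of_mem_doublyStochastic hMds
  set c : Fin n → Fin n → ℝ := fun p q => ∑ r, (lam p r - mu q r)^2 with hc
  set Tot : ℝ := ∑ r, ∑ p, ∑ q, Complex.normSq ((A r - B r) p q) with hTot
  have hTotc : Tot = ∑ p, ∑ q, M p q * c p q := by
    rw [hTot]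
    rw [Finset.sum_congr rfl fun r _ => hFkey r]
    rw [Finset.sum_comm]
    apply Finset.sum_congr rfl
    intro p _
    rw [Finset.sum_comm]
    apply Finset.sum_congr rfl
    intro q _
    rw [hc, Finset.mul_sum]
  have hperm : ∀ σ : Equiv.Perm (Fin n), ∑ p, ∑ q, (σ.permMatrix ℝ) p q * c p q
      = ∑ p, c p (σ p) := by
    intro σ
    apply Finset.sum_congr rfl
    intro p _
    rw [Finset.sum_eq_single (σ p)]
    · simp [Equiv.Perm.permMatrix, PEquiv.toMatrix_apply, Equiv.toPEquiv_apply]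
    · intro q _ hq
      have h2 : ¬ (σ p = q) := fun h => hq h.symm
      simp [Equiv.Perm.permMatrix, PEquiv.toMatrix_apply, Equiv.toPEquiv_apply, h2]
    · simp
  have hMpq : ∀ p q, M p q = ∑ σ : Equiv.Perm (Fin n), w σ * (σ.permMatrix ℝ) p q := by
    intro p q
    rw [← hwM]
    simp [Matrix.sum_apply]
  have havg : ∑ p, ∑ q, M p q * c p q
      = ∑ σ : Equiv.Perm (Fin n), w σ * ∑ p, c p (σ p) := by
    simp_rw [hMpq, Finset.sum_mul]
    have hswap : ∀ (f : Fin n → Fin n → Equiv.Perm (Fin n) → ℝ),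
        ∑ p, ∑ q, ∑ σ : Equiv.Perm (Fin n), f p q σ
          = ∑ σ : Equiv.Perm (Fin n), ∑ p, ∑ q, f p q σ :=
      fun f => (Finset.sum_congr rfl fun p _ => Finset.sum_comm).trans Finset.sum_comm
    rw [hswap]
    apply Finset.sum_congr rfl
    intro σ _
    rw [← hperm σ, Finset.mul_sum]
    apply Finset.sum_congr rfl
    intro p _
    rw [Finset.mul_sum]
    apply Finset.sum_congr rfl
    intro q _
    ring
  have hlow : ∃ σ : Equiv.Perm (Fin n), ∑ p, c p (σ p) ≤ Tot := by
    by_contra hcon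
    push_neg at hcon
    obtain ⟨σ0, _, hσ0⟩ := Finset.exists_ne_zero_of_sum_ne_zero
      (by rw [hw1]; exact one_ne_zero : ∑ σ : Equiv.Perm (Fin n), w σ ≠ 0)
    have hTT : Tot = ∑ σ : Equiv.Perm (Fin n), w σ * Tot := by
      rw [← Finset.sum_mul, hw1, one_mul]
    have hlt : ∑ σ : Equiv.Perm (Fin n), w σ * Tot
        < ∑ σ : Equiv.Perm (Fin n), w σ * ∑ p, c p (σ p) := by
      apply Finset.sum_lt_sum
      · intro σ _
        exact mul_le_mul_of_nonneg_left (le_of_lt (hcon σ)) (hw0 σ)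
      · exact ⟨σ0, Finset.mem_univ _,
          mul_lt_mul_of_pos_left (hcon σ0) ((hw0 σ0).lt_of_ne (Ne.symm hσ0))⟩
    rw [← hTT, ← havg, ← hTotc] at hlt
    exact lt_irrefl _ hlt
  obtain ⟨σ, hσ⟩ := hlow
  refine ⟨σ, fun i => ?_⟩
  calc ∑ r, (lam i r - mu (σ i) r)^2 = c i (σ i) := rfl
    _ ≤ ∑ p, c p (σ p) := Finset.single_le_sum (f := fun p => c p (σ p))
        (fun p _ => Finset.sum_nonneg fun r _ => sq_nonneg _) (Finset.mem_univ i)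
    _ ≤ Tot := hσ

theorem greedyChain {X : Type*} [MetricSpace X] [Inhabited X] (I : Set ℝ) (E : ℝ → Set X)
    (C : ℝ) (hC : 0 ≤ C) (hne : ∀ q ∈ I, (E q).Nonempty)
    (hmatch : ∀ t ∈ I, ∀ s ∈ I, ∀ v ∈ E t, ∃ w ∈ E s, dist v w ≤ C * |t - s|) :
    ∀ F : Finset ℝ, ↑F ⊆ I → ∃ g : ℝ → X, (∀ q ∈ F, g q ∈ E q) ∧
      ∀ q ∈ F, ∀ q' ∈ F, dist (g q) (g q') ≤ C * |q - q'| := by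
  intro F
  induction F using Finset.induction_on_max with
  | empty => exact fun _ => ⟨fun _ => default, by simp, by simp⟩
  | insert a F ha IH =>
    intro hsub
    have haI : a ∈ I := hsub (Finset.mem_insert_self a F)
    have hFI : ↑F ⊆ I := fun x hx => hsub (Finset.mem_insert_of_mem hx)
    obtain ⟨g, hg1, hg2⟩ := IH hFI
    rcases F.eq_empty_or_nonempty with rfl | hFne
    · obtain ⟨v, hv⟩ := hne a haI
      refine ⟨fun _ => v, ?_, ?_⟩
      · intro q hq
        rcases Finset.mem_insert.1 hq with rfl | hq'
        · exact hv
        · exact absurd hq' (Finset.notMem_empty q)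
      · intro q hq q' hq'
        simp only [dist_self]
        positivity
    · set m := F.max' hFne with hm
      have hmF : m ∈ F := F.max'_mem hFne
      obtain ⟨w, hw, hdw⟩ := hmatch m (hFI hmF) a haI (g m) (hg1 m hmF)
      have hqa : ∀ q ∈ F, dist (g q) w ≤ C * |q - a| := by
        intro q hq
        have hqm : q ≤ m := F.le_max' q hq
        have hma : m < a := ha m hmF
        have e1 : |q - m| = m - q := by
          rw [abs_sub_comm]; exact abs_of_nonneg (by linarith)
        have e2 : |m - a| = a - m := by
          rw [abs_sub_comm]; exact abs_of_nonneg (by linarith)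
        have e3 : |q - a| = a - q := by
          rw [abs_sub_comm]; exact abs_of_nonneg (by linarith)
        calc dist (g q) w ≤ dist (g q) (g m) + dist (g m) w := dist_triangle _ _ _
          _ ≤ C * |q - m| + C * |m - a| := add_le_add (hg2 q hq m hmF) hdw
          _ = C * |q - a| := by rw [e1, e2, e3]; ring
      have hne_a : ∀ q ∈ F, q ≠ a := fun q hq => ne_of_lt (ha q hq)
      refine ⟨Function.update g a w, ?_, ?_⟩
      · intro q hq
        rcases Finset.mem_insert.1 hq with rfl | hq'
        · rw [Function.update_self]; exact hw
        · rw [Function.update_of_ne (hne_a q hq')]; exact hg1 q hq'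
      · intro q hq q' hq'
        rcases Finset.mem_insert.1 hq with rfl | hq1 <;>
          rcases Finset.mem_insert.1 hq' with h' | hq2
        · subst h'
          simp only [Function.update_self, dist_self]
          positivity
        · rw [Function.update_self, Function.update_of_ne (hne_a q' hq2), dist_comm]
          have := hqa q' hq2
          rwa [abs_sub_comm] at this
        · subst h'
          rw [Function.update_self, Function.update_of_ne (hne_a _ hq1)]
          exact hqa _ hq1
        · rw [Function.update_of_ne (hne_a _ hq1), Function.update_of_ne (hne_a _ hq2)]
          exact hg2 _ hq1 _ hq2

/-- The joint eigenvalues of a Lipschitz curve in `CS^d_n` on an interval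
can be represented by Lipschitz functions `x_1, ..., x_n : I → ℝ^d`: at each `t ∈ I`
their values enumerate the joint spectrum (with multiplicity), i.e. some unitary
simultaneously diagonalizes `S(t)` with diagonal entries `x_i(t)`. -/
theorem stmt14 (d n : ℕ) (I : Set ℝ) (hI : I.OrdConnected)
    (S : ℝ → Fin d → Matrix (Fin n) (Fin n) ℂ)
    (hherm : ∀ t ∈ I, ∀ r, (S t r).IsHermitian)
    (hcomm : ∀ t ∈ I, ∀ r s, S t r * S t s = S t s * S t r)
    (K : NNReal) (hLip : ∀ r i j, LipschitzOnWith K (fun t => S t r i j) I) :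
    ∃ (x : Fin n → ℝ → Fin d → ℝ) (K' : NNReal),
      (∀ i, LipschitzOnWith K' (x i) I) ∧
      (∀ t ∈ I, ∃ U ∈ Matrix.unitaryGroup (Fin n) ℂ, ∀ r,
        S t r = U * Matrix.diagonal (fun i => (x i t r : ℂ)) * star U) := by
  classical
  -- diagonalize at each point of I
  have h := fun (t : ℝ) (ht : t ∈ I) =>
    jointDiag d n (S t) (hherm t ht) (hcomm t ht)
  choose U hUmem lam hlam using h
  -- the Lipschitz constant
  set C : ℝ := Real.sqrt d * n * K with hCdef
  have hC0 : 0 ≤ C := by positivity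
  -- matching estimate between eigenvalue tuples
  have hmatch : ∀ (t : ℝ) (ht : t ∈ I) (s : ℝ) (hs : s ∈ I), ∃ π : Equiv.Perm (Fin n),
      ∀ i, dist (lam t ht i) (lam s hs (π i)) ≤ C * |t - s| := by
    intro t ht s hs
    obtain ⟨π, hπ⟩ := hwMatch d n (S t) (S s) (U t ht) (U s hs) (hUmem t ht) (hUmem s hs)
      (lam t ht) (lam s hs) (hlam t ht) (hlam s hs)
    have hentry : ∀ (r : Fin d) (p q : Fin n),
        Complex.normSq ((S t r - S s r) p q) ≤ (K * |t - s|)^2 := by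
      intro r p q
      have h1 : dist (S t r p q) (S s r p q) ≤ K * |t - s| := by
        have := (hLip r p q).dist_le_mul t ht s hs
        rwa [Real.dist_eq] at this
      rw [Matrix.sub_apply, Complex.normSq_eq_norm_sq, ← Complex.dist_eq]
      exact pow_le_pow_left₀ dist_nonneg h1 2
    have hTot : ∑ r, ∑ p, ∑ q, Complex.normSq ((S t r - S s r) p q)
        ≤ (C * |t - s|)^2 := by
      have hsum : ∑ r : Fin d, ∑ p : Fin n, ∑ q : Fin n,
          Complex.normSq ((S t r - S s r) p q)
          ≤ ∑ _r : Fin d, ∑ _p : Fin n, ∑ _q : Fin n, (K * |t - s|)^2 := by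
        apply Finset.sum_le_sum; intro r _
        apply Finset.sum_le_sum; intro p _
        apply Finset.sum_le_sum; intro q _
        exact hentry r p q
      have hconst : ∑ _r : Fin d, ∑ _p : Fin n, ∑ _q : Fin n, ((K : ℝ) * |t - s|)^2
          = d * n * n * ((K : ℝ) * |t - s|)^2 := by
        simp [Finset.sum_const, Finset.card_univ, nsmul_eq_mul]
        ring
      have hCsq : (C * |t - s|)^2 = d * n * n * ((K : ℝ) * |t - s|)^2 := by
        rw [hCdef]
        rw [mul_pow, mul_pow, mul_pow, mul_pow, Real.sq_sqrt (Nat.cast_nonneg d)]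
        ring
      rw [hCsq]
      rw [hconst] at hsum
      exact hsum
    refine ⟨π, fun i => ?_⟩
    rw [dist_pi_le_iff (by positivity)]
    intro r
    have h1 : (lam t ht i r - lam s hs (π i) r)^2 ≤ (C * |t - s|)^2 := by
      calc (lam t ht i r - lam s hs (π i) r)^2
          ≤ ∑ r', (lam t ht i r' - lam s hs (π i) r')^2 :=
            Finset.single_le_sum (f := fun r' => (lam t ht i r' - lam s hs (π i) r')^2)
              (fun r' _ => sq_nonneg _) (Finset.mem_univ r)
        _ ≤ _ := le_trans (hπ i) hTot
    have h2 : |lam t ht i r - lam s hs (π i) r| ≤ C * |t - s| := by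
      have := Real.sqrt_le_sqrt h1
      rwa [Real.sqrt_sq_eq_abs, Real.sqrt_sq (by positivity)] at this
    rwa [Real.dist_eq]
  -- the sets of admissible enumerations
  set E : ℝ → Set (Fin n → Fin d → ℝ) := fun q =>
    if h : q ∈ I then Set.range (fun π : Equiv.Perm (Fin n) => fun i => lam q h (π i))
    else {0} with hEdef
  have hEq : ∀ (q : ℝ) (h : q ∈ I),
      E q = Set.range (fun π : Equiv.Perm (Fin n) => fun i => lam q h (π i)) :=
    fun q h => dif_pos h
  have hEq0 : ∀ (q : ℝ), q ∉ I → E q = {0} := fun q h => dif_neg h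
  have hEfin : ∀ q, (E q).Finite := by
    intro q
    by_cases h : q ∈ I
    · rw [hEq q h]; exact Set.finite_range _
    · rw [hEq0 q h]; exact Set.finite_singleton _
  have hEne : ∀ q ∈ I, (E q).Nonempty := by
    intro q h
    rw [hEq q h]
    exact ⟨_, ⟨1, rfl⟩⟩
  have hEmatch : ∀ t ∈ I, ∀ s ∈ I, ∀ v ∈ E t, ∃ w ∈ E s, dist v w ≤ C * |t - s| := by
    intro t ht s hs v hv
    rw [hEq t ht] at hv
    obtain ⟨π, rfl⟩ := hv
    obtain ⟨σ, hσ⟩ := hmatch t ht s hs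
    refine ⟨fun i => lam s hs (σ (π i)), ?_, ?_⟩
    · rw [hEq s hs]
      exact ⟨π.trans σ, rfl⟩
    · rw [dist_pi_le_iff (by positivity)]
      intro i
      exact hσ (π i)
  have hEdiag : ∀ (t : ℝ) (ht : t ∈ I), ∀ v ∈ E t,
      ∃ U' ∈ Matrix.unitaryGroup (Fin n) ℂ, ∀ r,
        S t r = U' * Matrix.diagonal (fun i => (v i r : ℂ)) * star U' := by
    intro t ht v hv
    rw [hEq t ht] at hv
    obtain ⟨π, rfl⟩ := hv
    obtain ⟨P, hP, hPd⟩ := exists_unitary_perm n π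
    refine ⟨U t ht * P, mul_mem (hUmem t ht) hP, fun r => ?_⟩
    have hPdr := hPd (fun i => (lam t ht (π i) r : ℂ))
    have h2 : (fun i => (lam t ht (π (π⁻¹ i)) r : ℂ)) = fun i => (lam t ht i r : ℂ) := by
      funext i
      simp
    rw [h2] at hPdr
    rw [hlam t ht r, Matrix.star_mul, ← hPdr]
    simp only [Matrix.mul_assoc]
  -- countable dense subset of I
  obtain ⟨c, hccount, hcdense⟩ := TopologicalSpace.exists_countable_dense ↥I
  set D : Set ℝ := Subtype.val '' c with hDdef
  have hDI : D ⊆ I := by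
    rintro q ⟨⟨q', hq'⟩, _, rfl⟩
    exact hq'
  have hDcl : ∀ t ∈ I, t ∈ closure D := by
    intro t ht
    have h1 : (⟨t, ht⟩ : ↥I) ∈ closure c := hcdense _
    exact map_mem_closure continuous_subtype_val h1 (Set.mapsTo_image _ _)
  -- compactness: find a global selection over D
  set Efull : ℝ → Set (Fin n → Fin d → ℝ) := fun q => if q ∈ D then E q else {0}
    with hEfulldef
  have hEfullE : ∀ q ∈ D, Efull q = E q := fun q h => if_pos h
  have hEfull0 : ∀ (q : ℝ), q ∉ D → Efull q = {0} := fun q h => if_neg h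
  have hKcomp : IsCompact (Set.pi Set.univ Efull) := by
    apply isCompact_univ_pi
    intro q
    by_cases h : q ∈ D
    · rw [hEfullE q h]; exact (hEfin q).isCompact
    · rw [hEfull0 q h]; exact isCompact_singleton
  set Z : (↥D × ↥D) → Set (ℝ → Fin n → Fin d → ℝ) := fun p =>
    {f | dist (f p.1.1) (f p.2.1) ≤ C * |(p.1.1 : ℝ) - p.2.1|} with hZdef
  have hZclosed : ∀ p, IsClosed (Z p) := by
    intro p
    apply isClosed_le
    · exact Continuous.dist (continuous_apply _) (continuous_apply _)
    · exact continuous_const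
  have hFIP : ∀ u : Finset (↥D × ↥D),
      (Set.pi Set.univ Efull ∩ ⋂ p ∈ u, Z p).Nonempty := by
    intro u
    set F : Finset ℝ := (u.image fun p => (p.1.1 : ℝ)) ∪ (u.image fun p => (p.2.1 : ℝ))
      with hFdef
    have hFD : ↑F ⊆ D := by
      intro q hq
      rw [hFdef] at hq
      simp only [Finset.coe_union, Set.mem_union, Finset.coe_image, Set.mem_image] at hq
      rcases hq with ⟨p, _, rfl⟩ | ⟨p, _, rfl⟩
      · exact p.1.2
      · exact p.2.2
    have hFI : ↑F ⊆ I := fun q hq => hDI (hFD hq)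
    obtain ⟨g, hg1, hg2⟩ := greedyChain I E C hC0 hEne hEmatch F hFI
    refine ⟨fun q => if q ∈ F then g q else if h : q ∈ D then (hEne q (hDI h)).some
      else 0, ?_, ?_⟩
    · rw [Set.mem_pi]
      intro q _
      by_cases hD : q ∈ D
      · rw [hEfullE q hD]
        by_cases hF : q ∈ F
        · rw [if_pos hF]; exact hg1 q hF
        · rw [if_neg hF, dif_pos hD]; exact (hEne q (hDI hD)).some_mem
      · have hF : q ∉ F := fun h => hD (hFD h)
        rw [hEfull0 q hD, if_neg hF, dif_neg hD]
        rfl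
    · rw [Set.mem_iInter₂]
      intro p hp
      have h1 : (p.1.1 : ℝ) ∈ F := by
        rw [hFdef]
        exact Finset.mem_union_left _ (Finset.mem_image_of_mem _ hp)
      have h2 : (p.2.1 : ℝ) ∈ F := by
        rw [hFdef]
        exact Finset.mem_union_right _ (Finset.mem_image_of_mem _ hp)
      simp only [hZdef, Set.mem_setOf_eq, if_pos h1, if_pos h2]
      exact hg2 _ h1 _ h2
  obtain ⟨f, hfK, hfZ⟩ := hKcomp.inter_iInter_nonempty Z hZclosed hFIP
  have hfE : ∀ q ∈ D, f q ∈ E q := by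
    intro q hq
    have := (Set.mem_pi.1 hfK) q (Set.mem_univ q)
    rwa [hEfullE q hq] at this
  have hfLip : ∀ q ∈ D, ∀ q' ∈ D, dist (f q) (f q') ≤ C * |q - q'| := by
    intro q hq q' hq'
    have := Set.mem_iInter.1 hfZ (⟨q, hq⟩, ⟨q', hq'⟩)
    exact this
  -- extend to global Lipschitz functions
  set K' : NNReal := ⟨C, hC0⟩ with hK'def
  have hLipD : ∀ i : Fin n, LipschitzOnWith K' (fun q => f q i) D := by
    intro i
    apply LipschitzOnWith.of_dist_le_mul
    intro q hq q' hq'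
    calc dist (f q i) (f q' i) ≤ dist (f q) (f q') := dist_le_pi_dist _ _ i
      _ ≤ C * |q - q'| := hfLip q hq q' hq'
      _ = (K' : ℝ) * dist q q' := by rw [Real.dist_eq]; rfl
  have hext : ∀ i : Fin n, ∃ g : ℝ → Fin d → ℝ, LipschitzWith K' g ∧
      Set.EqOn (fun q => f q i) g D := fun i => (hLipD i).extend_pi
  choose x hxLip hxEq using hext
  refine ⟨x, K', fun i => (hxLip i).lipschitzOnWith, ?_⟩
  intro t ht
  obtain ⟨q, hqD, hqlim⟩ := mem_closure_iff_seq_limit.1 (hDcl t ht)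
  have hstep : ∀ k : ℕ, ∃ π : Equiv.Perm (Fin n),
      ∀ i, dist (x i t) (lam t ht (π i)) ≤ 2 * C * dist (q k) t := by
    intro k
    have hqI : q k ∈ I := hDI (hqD k)
    obtain ⟨w, hwE, hdvw⟩ := hEmatch (q k) hqI t ht (f (q k)) (hfE _ (hqD k))
    rw [hEq t ht] at hwE
    obtain ⟨π, rfl⟩ := hwE
    refine ⟨π, fun i => ?_⟩
    have e1 : dist (x i t) (x i (q k)) ≤ C * dist t (q k) := by
      have := (hxLip i).dist_le_mul t (q k)
      exact this
    have e2 : x i (q k) = f (q k) i := (hxEq i (hqD k)).symm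
    have e3 : dist (f (q k) i) (lam t ht (π i)) ≤ C * |q k - t| := by
      calc dist (f (q k) i) (lam t ht (π i))
          ≤ dist (f (q k)) (fun j => lam t ht (π j)) :=
            dist_le_pi_dist (f (q k)) (fun j => lam t ht (π j)) i
        _ ≤ C * |q k - t| := hdvw
    calc dist (x i t) (lam t ht (π i))
        ≤ dist (x i t) (x i (q k)) + dist (x i (q k)) (lam t ht (π i)) :=
          dist_triangle _ _ _
      _ ≤ C * dist t (q k) + C * |q k - t| := by
          apply add_le_add e1
          rw [e2]; exact e3
      _ = 2 * C * dist (q k) t := by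
          rw [dist_comm t (q k), Real.dist_eq]
          ring
  choose π hπ using hstep
  obtain ⟨π0, hπ0⟩ := Finite.exists_infinite_fiber π
  have hinf : (π ⁻¹' {π0} : Set ℕ).Infinite := Set.infinite_coe_iff.1 hπ0
  have hxv : ∀ i, x i t = lam t ht (π0 i) := by
    intro i
    have hd0 : dist (x i t) (lam t ht (π0 i)) ≤ 0 := by
      apply le_of_forall_pos_le_add
      intro ε hε
      have hδ : 0 < ε / (2 * C + 1) := by positivity
      obtain ⟨N, hN⟩ := Metric.tendsto_atTop.1 hqlim (ε / (2 * C + 1)) hδ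
      obtain ⟨k, hkmem, hkN⟩ := hinf.exists_gt N
      have hπk : π k = π0 := hkmem
      have h1 := hπ k i
      rw [hπk] at h1
      have h2 : dist (q k) t < ε / (2 * C + 1) := hN k (le_of_lt hkN)
      calc dist (x i t) (lam t ht (π0 i)) ≤ 2 * C * dist (q k) t := h1
        _ ≤ 2 * C * (ε / (2 * C + 1)) := by
            apply mul_le_mul_of_nonneg_left (le_of_lt h2) (by positivity)
        _ ≤ ε := by
            rw [div_eq_mul_inv]
            rw [show (2:ℝ) * C * (ε * (2 * C + 1)⁻¹) = ε * ((2*C) * (2*C+1)⁻¹) by ring]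
            nth_rewrite 2 [← mul_one ε]
            apply mul_le_mul_of_nonneg_left _ (le_of_lt hε)
            rw [← div_eq_mul_inv]
            rw [div_le_one (by positivity)]
            linarith
        _ ≤ 0 + ε := by linarith
    have := le_antisymm hd0 dist_nonneg
    exact dist_eq_zero.1 this
  have hvE : (fun i => x i t) ∈ E t := by
    rw [hEq t ht]
    exact ⟨π0, by funext i; exact (hxv i).symm⟩
  exact hEdiag t ht _ hvE
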